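/- With the setup of speckled valuations (given fixed C), for every bundle A and distinct goods i,j,k ∉ A, at most one of the six sets Ai, Aj, Ak, Aij, Aik, Ajk belongs to C; consequently the triple (θ(Aij)+θ(Ak), θ(Aik)+θ(Aj), θ(Ajk)+θ(Ai)) has at least two entries equal to its minimum. -/
import Mathlib


def DoubleMin (x y z : ℝ) : Prop :=
  (x = min x (min y z) ∧ y = min x (min y z)) ∨
  (x = min x (min y z) ∧ z = min x (min y z)) ∨
  (y = min x (min y z) ∧ z = min x (min y z))

lemma ham2 {α : Type*} [DecidableEq α] (B : Finset α) (x y : α) :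
    ((insert x B) \ (insert y B)).card + ((insert y B) \ (insert x B)).card ≤ 2 := by
  have h1 : (insert x B) \ (insert y B) ⊆ {x} := by
    intro a ha
    simp only [Finset.mem_sdiff, Finset.mem_insert, not_or] at ha
    simp only [Finset.mem_singleton]
    tauto
  have h2 : (insert y B) \ (insert x B) ⊆ {y} := by
    intro a ha
    simp only [Finset.mem_sdiff, Finset.mem_insert, not_or] at ha
    simp only [Finset.mem_singleton]
    tauto
  have c1 := Finset.card_le_card h1
  have c2 := Finset.card_le_card h2
  simp only [Finset.card_singleton] at c1 c2
  omega

lemma doubleMin_aux (m a b c : ℝ) (ha : 0 ≤ a) (hb : 0 ≤ b) (hc : 0 ≤ c)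
    (h : (a = 0 ∧ b = 0) ∨ (a = 0 ∧ c = 0) ∨ (b = 0 ∧ c = 0)) :
    DoubleMin (m + a) (m + b) (m + c) := by
  unfold DoubleMin
  rcases h with ⟨h1, h2⟩ | ⟨h1, h2⟩ | ⟨h1, h2⟩ <;> subst h1 <;> subst h2
  · left
    have h1 : min (m + 0) (m + c) = m + 0 := min_eq_left (by linarith)
    rw [h1, min_self]
    exact ⟨rfl, rfl⟩
  · right; left
    have h1 : min (m + b) (m + 0) = m + 0 := min_eq_right (by linarith)
    rw [h1, min_self]
    exact ⟨rfl, rfl⟩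
  · right; right
    have h1 : min (m + 0) (m + 0) = m + 0 := min_self _
    rw [h1]
    have h2 : min (m + a) (m + 0) = m + 0 := min_eq_right (by linarith)
    rw [h2]
    exact ⟨rfl, rfl⟩

theorem speckled_at_most_one_speck {K : ℕ}
    (C : Finset (Finset (Fin K)))
    (hC1 : ∀ A ∈ C, 2 ≤ A.card ∧ A.card ≤ K - 1 ∧ Even A.card)
    (hC2 : ∀ A ∈ C, ∀ A' ∈ C, A ≠ A' → A.card = A'.card →
      4 ≤ (A \ A').card + (A' \ A).card)
    (β : ℕ → ℝ) (hβ : ∀ n, 0 ≤ β n ∧ β n ≤ 1) (hβ0 : β 0 = 0) (hβ1 : β 1 = 0)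
    (γ : Finset (Fin K) → ℝ) (hγ : ∀ A ∈ C, 0 ≤ γ A ∧ γ A ≤ 1)
    (θ : Finset (Fin K) → ℝ)
    (hθ : ∀ A : Finset (Fin K),
      θ A = β A.card + (if A ∈ C then γ A else 0)
        + 1.5 * (A.card : ℝ) * ((A.card : ℝ) - 1)) :
    ∀ (A : Finset (Fin K)) (i j k : Fin K),
      i ∉ A → j ∉ A → k ∉ A → i ≠ j → i ≠ k → j ≠ k →
      (({insert i A, insert j A, insert k A,
          insert i (insert j A), insert i (insert k A), insert j (insert k A)} :
          Finset (Finset (Fin K))).filter (· ∈ C)).card ≤ 1 ∧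
      DoubleMin (θ (insert i (insert j A)) + θ (insert k A))
                (θ (insert i (insert k A)) + θ (insert j A))
                (θ (insert j (insert k A)) + θ (insert i A)) := by
  intro A i j k hi hj hk hij hik hjk
  -- non-membership facts
  have hjA : j ∉ insert i A := by simp [Ne.symm hij, hj]
  have hkA : k ∉ insert i A := by simp [Ne.symm hik, hk]
  have hiB : i ∉ insert j A := by simp [hij, hi]
  have hkB : k ∉ insert j A := by simp [Ne.symm hjk, hk]
  have hiD : i ∉ insert k A := by simp [hik, hi]
  have hjD : j ∉ insert k A := by simp [hjk, hj]
  -- cards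
  have hci : (insert i A).card = A.card + 1 := Finset.card_insert_of_notMem hi
  have hcj : (insert j A).card = A.card + 1 := Finset.card_insert_of_notMem hj
  have hck : (insert k A).card = A.card + 1 := Finset.card_insert_of_notMem hk
  have hcij : (insert i (insert j A)).card = A.card + 2 := by
    rw [Finset.card_insert_of_notMem hiB, hcj]
  have hcik : (insert i (insert k A)).card = A.card + 2 := by
    rw [Finset.card_insert_of_notMem hiD, hck]
  have hcjk : (insert j (insert k A)).card = A.card + 2 := by
    rw [Finset.card_insert_of_notMem hjD, hck]
  -- same-size contradiction
  have cs : ∀ (B : Finset (Fin K)) (x y : Fin K) (X Y : Finset (Fin K)),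
      x ≠ y → x ∉ B → y ∉ B → X = insert x B → Y = insert y B →
      X ∈ C → Y ∈ C → False := by
    intro B x y X Y hxy hx hy hX hY hXC hYC
    subst hX; subst hY
    have hne : insert x B ≠ insert y B := by
      intro h
      have : x ∈ insert y B := h ▸ Finset.mem_insert_self x B
      simp [hxy, hx] at this
    have hcard : (insert x B).card = (insert y B).card := by
      rw [Finset.card_insert_of_notMem hx, Finset.card_insert_of_notMem hy]
    have h4 := hC2 _ hXC _ hYC hne hcard
    have h2 := ham2 B x y
    omega
  -- key: any two members of the six-set that lie in C are equal
  have key : ∀ X : Finset (Fin K),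
      (X = insert i A ∨ X = insert j A ∨ X = insert k A ∨
        X = insert i (insert j A) ∨ X = insert i (insert k A) ∨
        X = insert j (insert k A)) →
      ∀ Y : Finset (Fin K),
      (Y = insert i A ∨ Y = insert j A ∨ Y = insert k A ∨
        Y = insert i (insert j A) ∨ Y = insert i (insert k A) ∨
        Y = insert j (insert k A)) →
      X ∈ C → Y ∈ C → X = Y := by
    intro X hX Y hY hXC hYC
    rcases hX with rfl | rfl | rfl | rfl | rfl | rfl <;>
      rcases hY with rfl | rfl | rfl | rfl | rfl | rfl <;>
      first
      | rfl
      | (exfalso;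
         obtain ⟨a, ha⟩ := (hC1 _ hXC).2.2;
         obtain ⟨b, hb⟩ := (hC1 _ hYC).2.2;
         simp only [hci, hcj, hck, hcij, hcik, hcjk] at ha hb;
         omega)
      | (exfalso;
         first
          | exact cs A i j _ _ hij hi hj rfl rfl hXC hYC
          | exact cs A i k _ _ hik hi hk rfl rfl hXC hYC
          | exact cs A j k _ _ hjk hj hk rfl rfl hXC hYC
          | exact cs A j i _ _ (Ne.symm hij) hj hi rfl rfl hXC hYC
          | exact cs A k i _ _ (Ne.symm hik) hk hi rfl rfl hXC hYC
          | exact cs A k j _ _ (Ne.symm hjk) hk hj rfl rfl hXC hYC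
          | exact cs (insert i A) j k _ _ hjk hjA hkA
              (Finset.insert_comm i j A) (Finset.insert_comm i k A) hXC hYC
          | exact cs (insert i A) k j _ _ (Ne.symm hjk) hkA hjA
              (Finset.insert_comm i k A) (Finset.insert_comm i j A) hXC hYC
          | exact cs (insert j A) i k _ _ hik hiB hkB
              rfl (Finset.insert_comm j k A) hXC hYC
          | exact cs (insert j A) k i _ _ (Ne.symm hik) hkB hiB
              (Finset.insert_comm j k A) rfl hXC hYC
          | exact cs (insert k A) i j _ _ hij hiD hjD rfl rfl hXC hYC
          | exact cs (insert k A) j i _ _ (Ne.symm hij) hjD hiD rfl rfl hXC hYC)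
  constructor
  · apply Finset.card_le_one.mpr
    intro a ha b hb
    rw [Finset.mem_filter] at ha hb
    have ha1 := ha.1
    have hb1 := hb.1
    simp only [Finset.mem_insert, Finset.mem_singleton] at ha1 hb1
    exact key a ha1 b hb1 ha.2 hb.2
  · -- DoubleMin part
    set n : ℝ := (A.card : ℝ) with hn
    have hx : θ (insert i (insert j A)) + θ (insert k A) =
        (β (A.card + 2) + β (A.card + 1) + 1.5 * (n + 2) * (n + 1) + 1.5 * (n + 1) * n)
        + ((if insert i (insert j A) ∈ C then γ (insert i (insert j A)) else 0)
           + (if insert k A ∈ C then γ (insert k A) else 0)) := by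
      rw [hθ, hθ, hcij, hck]; push_cast; ring
    have hy : θ (insert i (insert k A)) + θ (insert j A) =
        (β (A.card + 2) + β (A.card + 1) + 1.5 * (n + 2) * (n + 1) + 1.5 * (n + 1) * n)
        + ((if insert i (insert k A) ∈ C then γ (insert i (insert k A)) else 0)
           + (if insert j A ∈ C then γ (insert j A) else 0)) := by
      rw [hθ, hθ, hcik, hcj]; push_cast; ring
    have hz : θ (insert j (insert k A)) + θ (insert i A) =
        (β (A.card + 2) + β (A.card + 1) + 1.5 * (n + 2) * (n + 1) + 1.5 * (n + 1) * n)
        + ((if insert j (insert k A) ∈ C then γ (insert j (insert k A)) else 0)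
           + (if insert i A ∈ C then γ (insert i A) else 0)) := by
      rw [hθ, hθ, hcjk, hci]; push_cast; ring
    rw [hx, hy, hz]
    have hind0 : ∀ X : Finset (Fin K), X ∉ C → (if X ∈ C then γ X else 0) = 0 :=
      fun X h => if_neg h
    have hindnn : ∀ X : Finset (Fin K), 0 ≤ (if X ∈ C then γ X else 0) := by
      intro X
      by_cases h : X ∈ C
      · rw [if_pos h]; exact (hγ X h).1
      · rw [if_neg h]
    apply doubleMin_aux _ _ _ _
      (add_nonneg (hindnn _) (hindnn _)) (add_nonneg (hindnn _) (hindnn _))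
      (add_nonneg (hindnn _) (hindnn _))
    -- distinctness facts needed
    have memne : ∀ (X Y : Finset (Fin K)) (x : Fin K), x ∈ X → x ∉ Y → X ≠ Y :=
      fun X Y x hx hy h => hy (h ▸ hx)
    have cardne : ∀ X Y : Finset (Fin K), X.card ≠ Y.card → X ≠ Y :=
      fun X Y h hXY => h (hXY ▸ rfl)
    have o1 : insert i A = insert i A ∨ insert i A = insert j A ∨ insert i A = insert k A ∨
        insert i A = insert i (insert j A) ∨ insert i A = insert i (insert k A) ∨
        insert i A = insert j (insert k A) := Or.inl rfl
    have o2 : insert j A = insert i A ∨ insert j A = insert j A ∨ insert j A = insert k A ∨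
        insert j A = insert i (insert j A) ∨ insert j A = insert i (insert k A) ∨
        insert j A = insert j (insert k A) := Or.inr (Or.inl rfl)
    have o3 : insert k A = insert i A ∨ insert k A = insert j A ∨ insert k A = insert k A ∨
        insert k A = insert i (insert j A) ∨ insert k A = insert i (insert k A) ∨
        insert k A = insert j (insert k A) := Or.inr (Or.inr (Or.inl rfl))
    have o4 : insert i (insert j A) = insert i A ∨ insert i (insert j A) = insert j A ∨
        insert i (insert j A) = insert k A ∨ insert i (insert j A) = insert i (insert j A) ∨
        insert i (insert j A) = insert i (insert k A) ∨
        insert i (insert j A) = insert j (insert k A) := Or.inr (Or.inr (Or.inr (Or.inl rfl)))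
    have o5 : insert i (insert k A) = insert i A ∨ insert i (insert k A) = insert j A ∨
        insert i (insert k A) = insert k A ∨ insert i (insert k A) = insert i (insert j A) ∨
        insert i (insert k A) = insert i (insert k A) ∨
        insert i (insert k A) = insert j (insert k A) :=
      Or.inr (Or.inr (Or.inr (Or.inr (Or.inl rfl))))
    have o6 : insert j (insert k A) = insert i A ∨ insert j (insert k A) = insert j A ∨
        insert j (insert k A) = insert k A ∨ insert j (insert k A) = insert i (insert j A) ∨
        insert j (insert k A) = insert i (insert k A) ∨
        insert j (insert k A) = insert j (insert k A) :=
      Or.inr (Or.inr (Or.inr (Or.inr (Or.inr rfl))))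
    by_cases hAij : insert i (insert j A) ∈ C
    · -- everything else not in C
      right; right
      have h1 : insert i (insert k A) ∉ C := fun h => by
        have := key _ o4 _ o5 hAij h
        exact memne _ _ j (by simp) (by simp [Ne.symm hij, hjk, hj]) this
      have h2 : insert j A ∉ C := fun h => by
        have := key _ o4 _ o2 hAij h
        exact cardne _ _ (by rw [hcij, hcj]; omega) this
      have h3 : insert j (insert k A) ∉ C := fun h => by
        have := key _ o4 _ o6 hAij h
        exact memne _ _ i (by simp) (by simp [hij, hik, hi]) this
      have h4 : insert i A ∉ C := fun h => by
        have := key _ o4 _ o1 hAij h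
        exact cardne _ _ (by rw [hcij, hci]; omega) this
      rw [hind0 _ h1, hind0 _ h2, hind0 _ h3, hind0 _ h4]
      norm_num
    by_cases hAk : insert k A ∈ C
    · right; right
      have h1 : insert i (insert k A) ∉ C := fun h => by
        have := key _ o3 _ o5 hAk h
        exact cardne _ _ (by rw [hck, hcik]; omega) this
      have h2 : insert j A ∉ C := fun h => by
        have := key _ o3 _ o2 hAk h
        exact memne _ _ k (by simp) (by simp [Ne.symm hjk, hk]) this
      have h3 : insert j (insert k A) ∉ C := fun h => by
        have := key _ o3 _ o6 hAk h
        exact cardne _ _ (by rw [hck, hcjk]; omega) this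
      have h4 : insert i A ∉ C := fun h => by
        have := key _ o3 _ o1 hAk h
        exact memne _ _ k (by simp) (by simp [Ne.symm hik, hk]) this
      rw [hind0 _ h1, hind0 _ h2, hind0 _ h3, hind0 _ h4]
      norm_num
    by_cases hAik : insert i (insert k A) ∈ C
    · right; left
      have h3 : insert j (insert k A) ∉ C := fun h => by
        have := key _ o5 _ o6 hAik h
        exact memne _ _ i (by simp) (by simp [hij, hik, hi]) this
      have h4 : insert i A ∉ C := fun h => by
        have := key _ o5 _ o1 hAik h
        exact cardne _ _ (by rw [hcik, hci]; omega) this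
      rw [hind0 _ hAij, hind0 _ hAk, hind0 _ h3, hind0 _ h4]
      norm_num
    by_cases hAj : insert j A ∈ C
    · right; left
      have h3 : insert j (insert k A) ∉ C := fun h => by
        have := key _ o2 _ o6 hAj h
        exact cardne _ _ (by rw [hcj, hcjk]; omega) this
      have h4 : insert i A ∉ C := fun h => by
        have := key _ o2 _ o1 hAj h
        exact memne _ _ j (by simp) (by simp [Ne.symm hij, hj]) this
      rw [hind0 _ hAij, hind0 _ hAk, hind0 _ h3, hind0 _ h4]
      norm_num
    · left
      rw [hind0 _ hAij, hind0 _ hAk, hind0 _ hAik, hind0 _ hAj]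
      norm_num
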